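/- arXiv:1504.02918 — 5 statements merged into one kernel-verified Lean document; each statement's English description precedes it below -/
import Mathlib

section
/- Let T > 0, c > 0 and let α be a real number with 2 ≤ α ≤ 4. Let y : [0,T] → ℝ be differentiable with y(t) ≥ 0 for all t ∈ [0,T], and suppose y'(t) ≤ c · (y(t)+1)² · y(t)^{α/2} for all t ∈ [0,T]. If ∫₀^{T} y(s)^{α/2} ds < (1 − cos(1/(y(0)+1)))/(2c), then for every t ∈ [0,T], y(t) ≤ 1/arccos((1 + cos(1/(y(0)+1)))/2) − 1. -/
open intervalIntegral

/-- If `y' ≤ c (y+1)² y^{α/2}` and `∫₀ᵀ y^{α/2} < (1 - cos(1/(y(0)+1)))/(2c)`,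
then `y` is uniformly bounded on `[0,T]`. -/
theorem bounded_from_small_integral (T c α : ℝ) (hT : 0 < T) (hc : 0 < c)
    (hα1 : 2 ≤ α) (hα2 : α ≤ 4) (y y' : ℝ → ℝ)
    (hy : ∀ t ∈ Set.Icc 0 T, HasDerivAt y (y' t) t)
    (hynn : ∀ t ∈ Set.Icc 0 T, 0 ≤ y t)
    (hineq : ∀ t ∈ Set.Icc 0 T, y' t ≤ c * (y t + 1) ^ 2 * y t ^ (α / 2))
    (hsmall : (∫ s in (0:ℝ)..T, y s ^ (α / 2)) <
      (1 - Real.cos (1 / (y 0 + 1))) / (2 * c)) :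
    ∀ t ∈ Set.Icc 0 T,
      y t ≤ 1 / Real.arccos ((1 + Real.cos (1 / (y 0 + 1))) / 2) - 1 := by
  have hα : (0:ℝ) < α / 2 := by linarith
  set f : ℝ → ℝ := fun s => y s ^ (α / 2) with hf
  -- positivity facts
  have hy1pos : ∀ t ∈ Set.Icc 0 T, 0 < y t + 1 := fun t ht => by
    have := hynn t ht; linarith
  have h0mem : (0:ℝ) ∈ Set.Icc 0 T := ⟨le_rfl, hT.le⟩
  have hu0pos : 0 < 1 / (y 0 + 1) := one_div_pos.2 (hy1pos 0 h0mem)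
  have hu0le : 1 / (y 0 + 1) ≤ 1 := by
    rw [div_le_one (hy1pos 0 h0mem)]
    have := hynn 0 h0mem; linarith
  have hpi : (1:ℝ) ≤ Real.pi := by linarith [Real.pi_gt_three]
  -- cos(1/(y0+1)) < 1
  have hcoslt : Real.cos (1 / (y 0 + 1)) < 1 := by
    have := Real.strictAntiOn_cos (Set.mem_Icc.2 ⟨le_rfl, Real.pi_pos.le⟩)
      (Set.mem_Icc.2 ⟨hu0pos.le, hu0le.trans hpi⟩) hu0pos
    simpa using this
  set K : ℝ := (1 + Real.cos (1 / (y 0 + 1))) / 2 with hK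
  have hKlt1 : K < 1 := by rw [hK]; linarith
  -- continuity of y on [0,T]
  have hycont : ContinuousOn y (Set.Icc 0 T) := fun t ht =>
    (hy t ht).continuousAt.continuousWithinAt
  have hycontAt : ∀ t ∈ Set.Icc 0 T, ContinuousAt y t := fun t ht => (hy t ht).continuousAt
  -- continuity of f on [0,T]
  have hfcontAt : ∀ t ∈ Set.Icc 0 T, ContinuousAt f t := fun t ht =>
    (Real.continuousAt_rpow_const (y t) (α / 2) (Or.inr hα.le)).comp (hycontAt t ht)
  have hfcont : ContinuousOn f (Set.Icc 0 T) := fun t ht =>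
    (hfcontAt t ht).continuousWithinAt
  have hfnonneg : ∀ t ∈ Set.Icc 0 T, 0 ≤ f t := fun t ht =>
    Real.rpow_nonneg (hynn t ht) _
  -- integrability
  have hfint : ∀ t ∈ Set.Icc 0 T, IntervalIntegrable f MeasureTheory.volume 0 t := by
    intro t ht
    apply ContinuousOn.intervalIntegrable
    have : Set.uIcc (0:ℝ) t = Set.Icc 0 t := Set.uIcc_of_le ht.1
    rw [this]
    exact hfcont.mono (Set.Icc_subset_Icc le_rfl ht.2)
  set F : ℝ → ℝ := fun t => ∫ s in (0:ℝ)..t, f s with hF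
  -- h := cos(1/(y+1)) - c * F is antitone on [0,T]
  set g : ℝ → ℝ := fun t => Real.cos ((y t + 1)⁻¹) with hg
  set h : ℝ → ℝ := fun t => g t - c * F t with hh
  have hIcc : Set.Icc (0:ℝ) T = Set.uIcc 0 T := (Set.uIcc_of_le hT.le).symm
  have hgcont : ContinuousOn g (Set.Icc 0 T) :=
    Real.continuous_cos.comp_continuousOn
      (((hycont.add continuousOn_const).inv₀) fun t ht => (hy1pos t ht).ne')
  have hFcont : ContinuousOn F (Set.Icc 0 T) := by
    rw [hIcc]
    exact intervalIntegral.continuousOn_primitive_interval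
      (by rw [← hIcc]; exact hfcont.integrableOn_compact isCompact_Icc)
  have hhcont : ContinuousOn h (Set.Icc 0 T) :=
    hgcont.sub (continuousOn_const.mul hFcont)
  -- derivative of h on the interior
  have hderiv : ∀ x ∈ Set.Ioo (0:ℝ) T,
      HasDerivAt h (Real.sin ((y x + 1)⁻¹) * (y' x / (y x + 1) ^ 2) - c * f x) x := by
    intro x hx
    have hxmem : x ∈ Set.Icc 0 T := Set.Ioo_subset_Icc_self hx
    have hu : HasDerivAt (fun t => (y t + 1)⁻¹) (-(y' x) / (y x + 1) ^ 2) x := by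
      have := ((hy x hxmem).add_const 1).inv (hy1pos x hxmem).ne'
      exact this
    have hgx : HasDerivAt g
        (-Real.sin ((y x + 1)⁻¹) * (-(y' x) / (y x + 1) ^ 2)) x :=
      (Real.hasDerivAt_cos _).comp x hu
    have hFx : HasDerivAt F (f x) x := by
      apply intervalIntegral.integral_hasDerivAt_right (hfint x hxmem)
      · exact ContinuousOn.stronglyMeasurableAtFilter isOpen_Ioo
          (fun t ht => (hfcontAt t (Set.Ioo_subset_Icc_self ht)).continuousWithinAt) x hx
      · exact hfcontAt x hxmem
    have := hgx.sub ((hFx.const_mul c))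
    refine this.congr_deriv ?_
    ring
  have hderiv' : ∀ x ∈ Set.Ioo (0:ℝ) T,
      Real.sin ((y x + 1)⁻¹) * (y' x / (y x + 1) ^ 2) - c * f x ≤ 0 := by
    intro x hx
    have hxmem : x ∈ Set.Icc 0 T := Set.Ioo_subset_Icc_self hx
    have hyp := hy1pos x hxmem
    have hupos : 0 < (y x + 1)⁻¹ := by positivity
    have hule : (y x + 1)⁻¹ ≤ 1 := inv_le_one_of_one_le₀ (by have := hynn x hxmem; linarith)
    have hsin0 : 0 ≤ Real.sin ((y x + 1)⁻¹) :=
      Real.sin_nonneg_of_nonneg_of_le_pi hupos.le (hule.trans hpi)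
    have hsin1 : Real.sin ((y x + 1)⁻¹) ≤ 1 := Real.sin_le_one _
    have hq : y' x / (y x + 1) ^ 2 ≤ c * f x := by
      rw [div_le_iff₀ (by positivity)]
      calc y' x ≤ c * (y x + 1) ^ 2 * y x ^ (α / 2) := hineq x hxmem
        _ = c * f x * (y x + 1) ^ 2 := by ring
    have hB : 0 ≤ c * f x := mul_nonneg hc.le (hfnonneg x hxmem)
    rcases le_or_gt (y' x / (y x + 1) ^ 2) 0 with hq0 | hq0
    · nlinarith
    · nlinarith
  have hanti : AntitoneOn h (Set.Icc 0 T) := by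
    apply antitoneOn_of_deriv_nonpos (convex_Icc 0 T) hhcont
    · intro x hx
      rw [interior_Icc] at hx
      exact (hderiv x hx).differentiableAt.differentiableWithinAt
    · intro x hx
      rw [interior_Icc] at hx
      rw [(hderiv x hx).deriv]
      exact hderiv' x hx
  -- main bound: cos((y t + 1)⁻¹) ≤ K for t ∈ [0,T]
  intro t ht
  have hht : h t ≤ h 0 := hanti h0mem ht ht.1
  have hF0 : F 0 = 0 := intervalIntegral.integral_same
  have hFt_le : F t ≤ F T := by
    have hsplit : F t + ∫ s in t..T, f s = F T :=
      intervalIntegral.integral_add_adjacent_intervals (hfint t ht)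
        (by
          apply ContinuousOn.intervalIntegrable
          rw [Set.uIcc_of_le ht.2]
          exact hfcont.mono (Set.Icc_subset_Icc ht.1 le_rfl))
    have hnn : 0 ≤ ∫ s in t..T, f s :=
      intervalIntegral.integral_nonneg ht.2 fun u hu =>
        hfnonneg u ⟨ht.1.trans hu.1, hu.2⟩
    linarith
  have hcFT : c * F T < (1 - Real.cos (1 / (y 0 + 1))) / 2 := by
    have := (lt_div_iff₀ (by positivity : (0:ℝ) < 2 * c)).1 hsmall
    calc c * F T = F T * c := mul_comm _ _
      _ < (1 - Real.cos (1 / (y 0 + 1))) / (2 * c) * c := by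
          exact mul_lt_mul_of_pos_right hsmall hc
      _ = (1 - Real.cos (1 / (y 0 + 1))) / 2 := by field_simp
  have hg0 : g 0 = Real.cos (1 / (y 0 + 1)) := by rw [hg]; simp [one_div]
  have hcosK : Real.cos ((y t + 1)⁻¹) ≤ K := by
    have h1 : g t - c * F t ≤ g 0 - c * F 0 := hht
    have h2 : c * F t ≤ c * F T := mul_le_mul_of_nonneg_left hFt_le hc.le
    have : g t ≤ Real.cos (1 / (y 0 + 1)) + c * F T := by
      rw [hg0, hF0] at h1; simp at h1; linarith
    rw [hK]; rw [hg] at this; simp only at this; linarith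
  -- transfer via arccos
  have hut0 : 0 < (y t + 1)⁻¹ := by have := hy1pos t ht; positivity
  have hut1 : (y t + 1)⁻¹ ≤ 1 := inv_le_one_of_one_le₀ (by have := hynn t ht; linarith)
  have harc : Real.arccos K ≤ (y t + 1)⁻¹ := by
    have h1 : Real.arccos K ≤ Real.arccos (Real.cos ((y t + 1)⁻¹)) := by
      rw [Real.arccos, Real.arccos]
      have := Real.monotone_arcsin hcosK
      linarith
    rwa [Real.arccos_cos hut0.le (hut1.trans hpi)] at h1
  have harcpos : 0 < Real.arccos K := Real.arccos_pos.2 hKlt1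
  have hyt1 : 0 < y t + 1 := hy1pos t ht
  have key : y t + 1 ≤ 1 / Real.arccos K := by
    rw [le_div_iff₀ harcpos]
    calc (y t + 1) * Real.arccos K ≤ (y t + 1) * (y t + 1)⁻¹ :=
          mul_le_mul_of_nonneg_left harc hyt1.le
      _ = 1 := mul_inv_cancel₀ hyt1.ne'
  rw [hK] at key
  linarith
end

section
/- Let T > 0, ν > 0, c > 0 and let α be a real number with 2 ≤ α ≤ 4. Let y : [0,T] → ℝ be differentiable with y(t) ≥ 0 for all t ∈ [0,T], and let A : [0,T] → ℝ satisfy A(t) ≥ 0 for all t ∈ [0,T]. Suppose y'(t) + ν·A(t)² ≤ c · y(t)^{3/4} · A(t)^{3/2} for all t ∈ [0,T], and that ∫₀^{T} y(s)^{α/2} ds < (16ν³/(27c⁴)) · (1 − cos(1/(y(0)+1))). Then for every t ∈ [0,T], y(t) ≤ 1/arccos((1 + cos(1/(y(0)+1)))/2) − 1; in particular y is bounded on [0,T]. -/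
open intervalIntegral

private lemma amgm4 (X Y : ℝ) (hX : 0 ≤ X) (hY : 0 ≤ Y) : 4*X^3*Y ≤ 3*X^4 + Y^4 := by
  nlinarith [mul_nonneg (mul_nonneg hX hX) (sq_nonneg (X-Y)),
    mul_nonneg (mul_nonneg hX hY) (sq_nonneg (X-Y)),
    mul_nonneg (mul_nonneg hY hY) (sq_nonneg (X-Y))]

private lemma ratio_le (a β : ℝ) (ha : 0 ≤ a) (hβ1 : 1 ≤ β) (hβ2 : β ≤ 2) :
    a^3 / (a+1)^3 ≤ a ^ β := by
  rcases le_or_gt a 1 with hle | hgt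
  · have h1 : a ^ (3:ℝ) ≤ a ^ β :=
      Real.rpow_le_rpow_of_exponent_ge' ha hle (by linarith) (by linarith)
    have h2 : a ^ (3:ℝ) = a ^ (3:ℕ) := Real.rpow_natCast a 3
    have h3 : a^3 / (a+1)^3 ≤ a^3 :=
      div_le_self (by positivity) (one_le_pow₀ (by linarith))
    calc a^3/(a+1)^3 ≤ a^3 := h3
      _ = a ^ (3:ℝ) := h2.symm
      _ ≤ a ^ β := h1
  · have h1 : a^3 / (a+1)^3 ≤ 1 := by
      rw [div_le_one (by positivity)]
      exact pow_le_pow_left₀ ha (by linarith) 3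
    have h2 : (1:ℝ) ≤ a ^ β := by
      calc (1:ℝ) ≤ a := hgt.le
        _ = a ^ (1:ℝ) := (Real.rpow_one a).symm
        _ ≤ a ^ β := Real.rpow_le_rpow_of_exponent_le hgt.le hβ1
    linarith

private lemma young (ν c a b : ℝ) (hν : 0 < ν) (hc : 0 ≤ c) (ha : 0 ≤ a) (hb : 0 ≤ b) :
    c * a ^ ((3:ℝ)/4) * b ^ ((3:ℝ)/2) ≤ ν * b^2 + 27*c^4/(256*ν^3) * a^3 := by
  set u := a ^ ((1:ℝ)/4) with hu
  set v := b ^ ((1:ℝ)/2) with hv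
  have hu0 : 0 ≤ u := Real.rpow_nonneg ha _
  have hv0 : 0 ≤ v := Real.rpow_nonneg hb _
  have ha34 : a ^ ((3:ℝ)/4) = u^3 := by
    rw [hu, ← Real.rpow_natCast (a ^ ((1:ℝ)/4)) 3, ← Real.rpow_mul ha]; norm_num
  have hb32 : b ^ ((3:ℝ)/2) = v^3 := by
    rw [hv, ← Real.rpow_natCast (b ^ ((1:ℝ)/2)) 3, ← Real.rpow_mul hb]; norm_num
  have hb2 : b^2 = v^4 := by
    rw [hv, ← Real.rpow_natCast (b ^ ((1:ℝ)/2)) 4, ← Real.rpow_mul hb]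
    norm_num
  have ha3 : a^3 = u^12 := by
    rw [hu, ← Real.rpow_natCast (a ^ ((1:ℝ)/4)) 12, ← Real.rpow_mul ha]
    norm_num
  rw [ha34, hb32, hb2, ha3]
  have hν3 : (0:ℝ) < 256*ν^3 := by positivity
  have key := amgm4 (4/3*ν*v) (c*u^3) (by positivity) (by positivity)
  have h1 : c*u^3*v^3 - ν*v^4 ≤ 27*c^4*u^12/(256*ν^3) := by
    rw [le_div_iff₀ hν3]; nlinarith [key]
  have h2 : 27*c^4/(256*ν^3)*u^12 = 27*c^4*u^12/(256*ν^3) := by ring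
  linarith

private lemma arccos_anti {x y : ℝ} (h : x ≤ y) : Real.arccos y ≤ Real.arccos x := by
  unfold Real.arccos
  linarith [Real.monotone_arcsin h]

/-- ODE form of the paper's Theorem 2: the differential inequality
`y' + νA² ≤ c y^{3/4} A^{3/2}` together with the smallness condition
`∫₀ᵀ y^{α/2} < (16ν³/(27c⁴))(1 - cos(1/(y(0)+1)))` yields a uniform bound on `y`. -/
theorem bounded_zero_force (T ν c α : ℝ) (hT : 0 < T) (hν : 0 < ν) (hc : 0 < c)
    (hα1 : 2 ≤ α) (hα2 : α ≤ 4) (y y' A : ℝ → ℝ)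
    (hy : ∀ t ∈ Set.Icc 0 T, HasDerivAt y (y' t) t)
    (hynn : ∀ t ∈ Set.Icc 0 T, 0 ≤ y t)
    (hA : ∀ t ∈ Set.Icc 0 T, 0 ≤ A t)
    (hineq : ∀ t ∈ Set.Icc 0 T,
      y' t + ν * A t ^ 2 ≤ c * y t ^ ((3:ℝ)/4) * A t ^ ((3:ℝ)/2))
    (hsmall : (∫ s in (0:ℝ)..T, y s ^ (α / 2)) <
      16 * ν ^ 3 / (27 * c ^ 4) * (1 - Real.cos (1 / (y 0 + 1)))) :
    ∀ t ∈ Set.Icc 0 T,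
      y t ≤ 1 / Real.arccos ((1 + Real.cos (1 / (y 0 + 1))) / 2) - 1 := by
  intro t ht
  have h0mem : (0:ℝ) ∈ Set.Icc (0:ℝ) T := ⟨le_rfl, hT.le⟩
  have hy0 : 0 ≤ y 0 := hynn 0 h0mem
  have hπ : (1:ℝ) ≤ Real.pi := by linarith [Real.pi_gt_three]
  set θ : ℝ := 1 / (y 0 + 1) with hθ
  have hy01 : (0:ℝ) < y 0 + 1 := by linarith
  have hθ0 : 0 < θ := by rw [hθ]; exact div_pos one_pos hy01
  have hθ1 : θ ≤ 1 := by rw [hθ, div_le_one hy01]; linarith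
  have hθπ : θ ≤ Real.pi := hθ1.trans hπ
  set K : ℝ := 27*c^4/(256*ν^3) with hK
  have hKpos : 0 < K := by rw [hK]; positivity
  -- pointwise derivative bound
  have hyd : ∀ u ∈ Set.Icc (0:ℝ) T, y' u ≤ K * y u ^ 3 := by
    intro u hu
    have h1 := hineq u hu
    have h2 := young ν c (y u) (A u) hν hc.le (hynn u hu) (hA u hu)
    have h3 : 0 ≤ ν * A u ^ 2 := by positivity
    rw [hK]
    linarith
  -- clamping
  set σ : ℝ → ℝ := fun s => max 0 (min s T) with hσ
  have hσmem : ∀ s, σ s ∈ Set.Icc (0:ℝ) T := fun s =>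
    ⟨le_max_left _ _, max_le hT.le (min_le_right _ _)⟩
  have hσid : ∀ s ∈ Set.Icc (0:ℝ) T, σ s = s := by
    intro s hs
    rw [hσ]
    simp only [min_eq_left hs.2, max_eq_right hs.1]
  have hσcont : Continuous σ := continuous_const.max (continuous_id.min continuous_const)
  have hycont : ContinuousOn y (Set.Icc 0 T) := fun s hs =>
    ((hy s hs).continuousAt).continuousWithinAt
  set f : ℝ → ℝ := fun s => y (σ s) ^ (α/2) with hf
  have hfcont : Continuous f :=
    (hycont.comp_continuous hσcont hσmem).rpow_const (fun s => Or.inr (by linarith))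
  have hfnn : ∀ s, 0 ≤ f s := fun s => Real.rpow_nonneg (hynn _ (hσmem s)) _
  set F : ℝ → ℝ := fun u => ∫ s in (0:ℝ)..u, f s with hF
  have hFd : ∀ u, HasDerivAt F (f u) u := fun u =>
    intervalIntegral.integral_hasDerivAt_right (hfcont.intervalIntegrable _ _)
      (hfcont.stronglyMeasurableAtFilter _ _) hfcont.continuousAt
  -- the comparison function
  set g : ℝ → ℝ := fun u => K * F u - Real.cos ((y u + 1)⁻¹) with hg
  have hgd : ∀ u ∈ Set.Icc (0:ℝ) T,
      HasDerivAt g (K * f u - Real.sin ((y u + 1)⁻¹) * y' u / (y u + 1)^2) u := by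
    intro u hu
    have hyu : 0 ≤ y u := hynn u hu
    have hpos : 0 < y u + 1 := by linarith
    have h1 : HasDerivAt (fun w => y w + 1) (y' u) u := (hy u hu).add_const 1
    have h2 : HasDerivAt (fun w => (y w + 1)⁻¹) (-(y' u) / (y u + 1)^2) u := h1.inv hpos.ne'
    have h3 := h2.cos
    have h4 := ((hFd u).const_mul K).sub h3
    exact h4.congr_deriv (by ring)
  have hg'nn : ∀ u ∈ Set.Icc (0:ℝ) T,
      0 ≤ K * f u - Real.sin ((y u + 1)⁻¹) * y' u / (y u + 1)^2 := by
    intro u hu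
    have hyu : 0 ≤ y u := hynn u hu
    have hpos : 0 < y u + 1 := by linarith
    have hx0 : 0 < (y u + 1)⁻¹ := inv_pos.2 hpos
    have hx1 : (y u + 1)⁻¹ ≤ 1 := by
      rw [inv_le_one_iff₀]; right; linarith
    have hsin0 : 0 ≤ Real.sin ((y u + 1)⁻¹) :=
      Real.sin_nonneg_of_nonneg_of_le_pi hx0.le (hx1.trans hπ)
    have hsinle : Real.sin ((y u + 1)⁻¹) ≤ (y u + 1)⁻¹ := Real.sin_le hx0.le
    have hfu : f u = y u ^ (α/2) := by
      rw [hf]; simp only [hσid u hu]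
    have hfnn' : 0 ≤ y u ^ (α/2) := Real.rpow_nonneg hyu _
    have hsq : (0:ℝ) < (y u + 1)^2 := by positivity
    rcases le_or_gt (y' u) 0 with hneg | hpos'
    · have hmul : Real.sin ((y u + 1)⁻¹) * y' u ≤ 0 := by
        nlinarith [mul_nonneg hsin0 (neg_nonneg.2 hneg)]
      have h1 : Real.sin ((y u + 1)⁻¹) * y' u / (y u + 1)^2 ≤ 0 :=
        div_nonpos_of_nonpos_of_nonneg hmul hsq.le
      have h2 : 0 ≤ K * f u := mul_nonneg hKpos.le (hfnn u)
      linarith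
    · have h1 : Real.sin ((y u + 1)⁻¹) * y' u ≤ (y u + 1)⁻¹ * (K * y u ^ 3) :=
        mul_le_mul hsinle (hyd u hu) hpos'.le hx0.le
      have h2 : Real.sin ((y u + 1)⁻¹) * y' u / (y u + 1)^2 ≤
          (y u + 1)⁻¹ * (K * y u ^ 3) / (y u + 1)^2 := by gcongr
      have h3 : (y u + 1)⁻¹ * (K * y u ^ 3) / (y u + 1)^2 = K * (y u ^3 / (y u + 1)^3) := by
        rw [inv_mul_eq_div, div_div, ← pow_succ', mul_div_assoc]
      have h4 : y u ^3 / (y u + 1)^3 ≤ y u ^ (α/2) :=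
        ratio_le (y u) (α/2) hyu (by linarith) (by linarith)
      have h5 : K * (y u ^3 / (y u + 1)^3) ≤ K * y u ^ (α/2) :=
        mul_le_mul_of_nonneg_left h4 hKpos.le
      rw [hfu]
      linarith
  -- monotonicity of g
  have hgmono : MonotoneOn g (Set.Icc 0 T) := by
    apply monotoneOn_of_deriv_nonneg (convex_Icc 0 T)
    · have hFc : Continuous F := by
        rw [continuous_iff_continuousAt]; exact fun u => (hFd u).continuousAt
      have hinv : ContinuousOn (fun u => (y u + 1)⁻¹) (Set.Icc 0 T) :=
        (hycont.add continuousOn_const).inv₀ (fun s hs => by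
          have := hynn s hs; exact (by linarith : (0:ℝ) < y s + 1).ne')
      exact ((continuous_const.mul hFc).continuousOn).sub
        (Real.continuous_cos.comp_continuousOn hinv)
    · rw [interior_Icc]
      exact fun u hu =>
        ((hgd u (Set.Ioo_subset_Icc_self hu)).differentiableAt).differentiableWithinAt
    · rw [interior_Icc]
      intro u hu
      rw [(hgd u (Set.Ioo_subset_Icc_self hu)).deriv]
      exact hg'nn u (Set.Ioo_subset_Icc_self hu)
  have hmain : g 0 ≤ g t := hgmono h0mem ht ht.1
  have hF0 : F 0 = 0 := intervalIntegral.integral_same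
  have hFtT : F t ≤ F T :=
    intervalIntegral.integral_mono_interval le_rfl ht.1 ht.2
      (MeasureTheory.ae_of_all _ (fun s => hfnn s)) (hfcont.intervalIntegrable 0 T)
  have hFT : F T = ∫ s in (0:ℝ)..T, y s ^ (α / 2) := by
    apply intervalIntegral.integral_congr
    intro s hs
    rw [Set.uIcc_of_le hT.le] at hs
    simp only [hf, hσid s hs]
  have hsmall' : K * F T < (1 - Real.cos θ)/16 := by
    have heq : K * (16 * ν ^ 3 / (27 * c ^ 4) * (1 - Real.cos θ)) = (1 - Real.cos θ)/16 := by
      rw [hK]; field_simp; ring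
    calc K * F T < K * (16 * ν ^ 3 / (27 * c ^ 4) * (1 - Real.cos θ)) := by
          rw [hFT]; exact mul_lt_mul_of_pos_left hsmall hKpos
      _ = (1 - Real.cos θ)/16 := heq
  have hcos1 : Real.cos θ < 1 := by
    have h := Real.cos_lt_cos_of_nonneg_of_le_pi le_rfl hθπ hθ0
    simpa using h
  have hcos_le : Real.cos θ ≤ 1 := hcos1.le
  have e0 : g 0 = - Real.cos θ := by
    rw [hg]
    simp only [hF0, ← one_div, ← hθ]
    ring
  have hgt : g t = K * F t - Real.cos ((y t + 1)⁻¹) := by rw [hg]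
  have hKFt : K * F t ≤ K * F T := mul_le_mul_of_nonneg_left hFtT hKpos.le
  have hcoslt : Real.cos ((y t + 1)⁻¹) ≤ (1 + Real.cos θ)/2 := by
    rw [e0, hgt] at hmain
    linarith
  -- conclude
  have hyt : 0 ≤ y t := hynn t ht
  have hytpos : 0 < y t + 1 := by linarith
  have hv1 : (1 + Real.cos θ)/2 < 1 := by linarith
  have hβpos : 0 < Real.arccos ((1 + Real.cos θ)/2) := Real.arccos_pos.2 hv1
  have hxt0 : 0 < (y t + 1)⁻¹ := inv_pos.2 hytpos
  have hxt1 : (y t + 1)⁻¹ ≤ 1 := by rw [inv_le_one_iff₀]; right; linarith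
  have harc : Real.arccos ((1 + Real.cos θ)/2) ≤ (y t + 1)⁻¹ := by
    have h1 := arccos_anti hcoslt
    rwa [Real.arccos_cos hxt0.le (hxt1.trans hπ)] at h1
  have hfin : (y t + 1) * Real.arccos ((1 + Real.cos θ)/2) ≤ 1 := by
    have h2 : (y t + 1) * Real.arccos ((1 + Real.cos θ)/2) ≤ (y t + 1) * (y t + 1)⁻¹ :=
      mul_le_mul_of_nonneg_left harc hytpos.le
    rwa [mul_inv_cancel₀ hytpos.ne'] at h2
  have h3 : y t + 1 ≤ 1 / Real.arccos ((1 + Real.cos θ)/2) := by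
    rw [le_div_iff₀ hβpos]; exact hfin
  linarith
end

section
/- Let T > 0, c ≥ 0 and let α be a real number with 2 ≤ α ≤ 4. Let y : [0,T] → ℝ be differentiable with y(t) ≥ 0 for all t ∈ [0,T], and let g : [0,T] → ℝ be Lebesgue integrable with g(t) ≥ 0 for all t ∈ [0,T]. Suppose y'(t) ≤ (y(t)+1)² · ( g(t) + c · y(t)^{α/2} ) for all t ∈ [0,T]. Then for every t ∈ [0,T], cos(1/(y(t)+1)) ≤ cos(1/(y(0)+1)) + ∫₀^{T} g(s) ds + c · ∫₀^{T} y(s)^{α/2} ds. -/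
open intervalIntegral MeasureTheory

/-- The forced cosine bound: if `y' ≤ (y+1)² (g + c y^{α/2})` with `g ≥ 0` integrable,
then `cos(1/(y(t)+1)) ≤ cos(1/(y(0)+1)) + ∫₀ᵀ g + c ∫₀ᵀ y^{α/2}`. -/
theorem cos_bound_from_diff_ineq_forced (T c α : ℝ) (hT : 0 < T) (hc : 0 ≤ c)
    (hα1 : 2 ≤ α) (hα2 : α ≤ 4) (y y' g : ℝ → ℝ)
    (hy : ∀ t ∈ Set.Icc 0 T, HasDerivAt y (y' t) t)
    (hynn : ∀ t ∈ Set.Icc 0 T, 0 ≤ y t)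
    (hgint : IntegrableOn g (Set.Icc 0 T))
    (hg : ∀ t ∈ Set.Icc 0 T, 0 ≤ g t)
    (hineq : ∀ t ∈ Set.Icc 0 T, y' t ≤ (y t + 1) ^ 2 * (g t + c * y t ^ (α / 2))) :
    ∀ t ∈ Set.Icc 0 T,
      Real.cos (1 / (y t + 1)) ≤
        Real.cos (1 / (y 0 + 1)) + (∫ s in (0:ℝ)..T, g s) +
          c * ∫ s in (0:ℝ)..T, y s ^ (α / 2) := by
  intro t ht
  obtain ⟨ht0, htT⟩ := ht
  have hycont : ContinuousOn y (Set.Icc 0 T) := fun s hs =>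
    ((hy s hs).continuousAt).continuousWithinAt
  set f : ℝ → ℝ := fun s => g s + c * y s ^ (α / 2) with hfdef
  have hα2pos : (0:ℝ) < α / 2 := by linarith
  have hpow_cont : ContinuousOn (fun s => y s ^ (α / 2)) (Set.Icc 0 T) := by
    apply hycont.rpow_const
    intro s hs
    right; exact hα2pos.le
  have hpowint : IntegrableOn (fun s => y s ^ (α / 2)) (Set.Icc 0 T) :=
    hpow_cont.integrableOn_compact isCompact_Icc
  have hfint : IntegrableOn f (Set.Icc 0 T) := hgint.add (hpowint.const_mul c)
  have hfnn : ∀ s ∈ Set.Icc 0 T, 0 ≤ f s := fun s hs =>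
    add_nonneg (hg s hs) (mul_nonneg hc (Real.rpow_nonneg (hynn s hs) _))
  set h : ℝ → ℝ := fun s => Real.cos (1 / (y s + 1)) with hhdef
  set h' : ℝ → ℝ := fun s => Real.sin (1 / (y s + 1)) * (y' s / (y s + 1) ^ 2) with hh'def
  have hy1pos : ∀ s ∈ Set.Icc 0 T, 0 < y s + 1 := fun s hs => by
    have := hynn s hs; linarith
  have hderiv : ∀ s ∈ Set.Icc 0 T, HasDerivAt h (h' s) s := by
    intro s hs
    have h1 : y s + 1 ≠ 0 := (hy1pos s hs).ne'
    have hinv : HasDerivAt (fun u => (y u + 1)⁻¹) (-(y' s) / (y s + 1) ^ 2) s :=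
      ((hy s hs).add_const 1).inv h1
    have := (Real.hasDerivAt_cos ((y s + 1)⁻¹)).comp s hinv
    convert this using 1
    · rfl
    · rfl
    · ext u; simp [hhdef, one_div]
    · show Real.sin (1 / (y s + 1)) * (y' s / (y s + 1) ^ 2) = _; simp only [one_div]
      ring
  have hcont : ContinuousOn h (Set.Icc 0 T) := fun s hs =>
    ((hderiv s hs).continuousAt).continuousWithinAt
  have hsub : Set.Icc (0:ℝ) t ⊆ Set.Icc 0 T := Set.Icc_subset_Icc le_rfl htT
  have hbound : ∀ s ∈ Set.Ioo (0:ℝ) t, h' s ≤ f s := by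
    intro s hs
    have hsmem : s ∈ Set.Icc 0 T := hsub (Set.Ioo_subset_Icc_self hs)
    have hup : (0:ℝ) < 1 / (y s + 1) := one_div_pos.2 (hy1pos s hsmem)
    have hule : 1 / (y s + 1) ≤ 1 := by
      rw [div_le_one (hy1pos s hsmem)]
      have := hynn s hsmem; linarith
    have hsin0 : 0 ≤ Real.sin (1 / (y s + 1)) :=
      Real.sin_nonneg_of_nonneg_of_le_pi hup.le (by
        have := Real.pi_gt_three; linarith)
    have hsin1 : Real.sin (1 / (y s + 1)) ≤ 1 := Real.sin_le_one _
    have hfs : 0 ≤ f s := hfnn s hsmem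
    rcases le_or_gt (y' s) 0 with hle | hlt
    · have : h' s ≤ 0 := mul_nonpos_of_nonneg_of_nonpos hsin0
        (div_nonpos_of_nonpos_of_nonneg hle (sq_nonneg _))
      linarith
    · have ha : 0 ≤ y' s / (y s + 1) ^ 2 := div_nonneg hlt.le (sq_nonneg _)
      have h2 : y' s / (y s + 1) ^ 2 ≤ f s := by
        rw [div_le_iff₀ (pow_pos (hy1pos s hsmem) 2)]
        show y' s ≤ (g s + c * y s ^ (α / 2)) * (y s + 1) ^ 2
        rw [mul_comm]
        exact hineq s hsmem
      calc h' s ≤ 1 * (y' s / (y s + 1) ^ 2) :=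
            mul_le_mul_of_nonneg_right hsin1 ha
        _ = y' s / (y s + 1) ^ 2 := one_mul _
        _ ≤ f s := h2
  have key : h t - h 0 ≤ ∫ s in (0:ℝ)..t, f s := by
    apply sub_le_integral_of_hasDeriv_right_of_le ht0 (hcont.mono hsub)
      (fun x hx => ((hderiv x (hsub (Set.Ioo_subset_Icc_self hx))).hasDerivWithinAt))
      (hfint.mono_set hsub) hbound
  have hgii : IntervalIntegrable g volume 0 T :=
    IntegrableOn.intervalIntegrable (by rwa [Set.uIcc_of_le hT.le])
  have hpii : IntervalIntegrable (fun s => y s ^ (α / 2)) volume 0 T :=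
    IntegrableOn.intervalIntegrable (by rwa [Set.uIcc_of_le hT.le])
  have hfii : IntervalIntegrable f volume 0 T :=
    IntegrableOn.intervalIntegrable (by rwa [Set.uIcc_of_le hT.le])
  have mono_int : (∫ s in (0:ℝ)..t, f s) ≤ ∫ s in (0:ℝ)..T, f s := by
    apply intervalIntegral.integral_mono_interval le_rfl ht0 htT _ hfii
    filter_upwards [ae_restrict_mem measurableSet_Ioc] with s hs
    exact hfnn s (Set.Ioc_subset_Icc_self hs)
  have split : (∫ s in (0:ℝ)..T, f s) =
      (∫ s in (0:ℝ)..T, g s) + c * ∫ s in (0:ℝ)..T, y s ^ (α / 2) := by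
    rw [hfdef]
    rw [intervalIntegral.integral_add hgii (hpii.const_mul c),
      intervalIntegral.integral_const_mul]
  have : h t ≤ h 0 + ((∫ s in (0:ℝ)..T, g s) + c * ∫ s in (0:ℝ)..T, y s ^ (α / 2)) := by
    rw [← split]
    linarith [key, mono_int]
  simpa [hhdef, add_assoc] using this
end

section
/- Let T > 0, c ≥ 0 and let α be a real number with 2 ≤ α ≤ 4. Let y : [0,T] → ℝ be differentiable with y(t) ≥ 0 for all t ∈ [0,T], and let g : [0,T] → ℝ be Lebesgue integrable with g(t) ≥ 0 for all t ∈ [0,T]. Suppose y'(t) ≤ (y(t)+1)² · ( g(t) + c · y(t)^{α/2} ) for all t ∈ [0,T], and set K = cos(1/(y(0)+1)) + ∫₀^{T} g(s) ds + c · ∫₀^{T} y(s)^{α/2} ds. If K < 1, then for every t ∈ [0,T], y(t) ≤ 1/arccos(K) − 1; in particular y is bounded on [0,T]. -/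
open intervalIntegral MeasureTheory

/-- Real-variable core of the paper's Proposition 3: if `y' ≤ (y+1)² (g + c y^{α/2})`
and `K = cos(1/(y(0)+1)) + ∫₀ᵀ g + c ∫₀ᵀ y^{α/2} < 1`, then `y ≤ 1/arccos(K) - 1`
on `[0,T]`. -/
theorem bounded_forced_from_K (T c α : ℝ) (hT : 0 < T) (hc : 0 ≤ c)
    (hα1 : 2 ≤ α) (hα2 : α ≤ 4) (y y' g : ℝ → ℝ)
    (hy : ∀ t ∈ Set.Icc 0 T, HasDerivAt y (y' t) t)
    (hynn : ∀ t ∈ Set.Icc 0 T, 0 ≤ y t)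
    (hgint : IntegrableOn g (Set.Icc 0 T))
    (hg : ∀ t ∈ Set.Icc 0 T, 0 ≤ g t)
    (hineq : ∀ t ∈ Set.Icc 0 T, y' t ≤ (y t + 1) ^ 2 * (g t + c * y t ^ (α / 2)))
    (K : ℝ)
    (hK : K = Real.cos (1 / (y 0 + 1)) + (∫ s in (0:ℝ)..T, g s) +
      c * ∫ s in (0:ℝ)..T, y s ^ (α / 2))
    (hK1 : K < 1) :
    ∀ t ∈ Set.Icc 0 T, y t ≤ 1 / Real.arccos K - 1 := by
  intro t ht
  -- basic positivity facts
  have hy1 : ∀ s ∈ Set.Icc 0 T, (1 : ℝ) ≤ y s + 1 := fun s hs => by linarith [hynn s hs]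
  have hy1pos : ∀ s ∈ Set.Icc 0 T, (0 : ℝ) < y s + 1 := fun s hs => by linarith [hynn s hs]
  have hαpos : (0 : ℝ) < α / 2 := by linarith
  -- continuity of y
  have ycont : ContinuousOn y (Set.Icc 0 T) := fun s hs =>
    (hy s hs).continuousAt.continuousWithinAt
  -- integrability of h := g + c * y^{α/2}
  set h : ℝ → ℝ := fun s => g s + c * y s ^ (α / 2) with hh
  have hpowcont : ContinuousOn (fun s => y s ^ (α / 2)) (Set.Icc 0 T) :=
    ycont.rpow_const (fun s hs => Or.inr hαpos.le)
  have hpowint : IntegrableOn (fun s => y s ^ (α / 2)) (Set.Icc 0 T) :=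
    hpowcont.integrableOn_Icc
  have hint : IntegrableOn h (Set.Icc 0 T) := hgint.add (hpowint.const_mul c)
  have hnn : ∀ s ∈ Set.Icc 0 T, 0 ≤ h s := fun s hs =>
    add_nonneg (hg s hs) (mul_nonneg hc (Real.rpow_nonneg (hynn s hs) _))
  -- the function F and its derivative
  set F : ℝ → ℝ := fun s => Real.cos ((y s + 1)⁻¹) with hF
  set F' : ℝ → ℝ := fun s => Real.sin ((y s + 1)⁻¹) * (y' s / (y s + 1) ^ 2) with hF'
  have hFderiv : ∀ s ∈ Set.Icc 0 T, HasDerivAt F (F' s) s := by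
    intro s hs
    have h1 : HasDerivAt (fun u => y u + 1) (y' s) s := (hy s hs).add_const 1
    have h2 : HasDerivAt (fun u => (y u + 1)⁻¹) (-(y' s) / (y s + 1) ^ 2) s :=
      h1.inv (hy1pos s hs).ne'
    have h3 := (Real.hasDerivAt_cos ((y s + 1)⁻¹)).comp s h2
    refine h3.congr_deriv ?_
    simp only [hF']
    ring
  -- pointwise bound F' ≤ h
  have hF'le : ∀ s ∈ Set.Icc 0 T, F' s ≤ h s := by
    intro s hs
    have hu0 : (0 : ℝ) < (y s + 1)⁻¹ := inv_pos.2 (hy1pos s hs)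
    have hu1 : (y s + 1)⁻¹ ≤ 1 := inv_le_one_of_one_le₀ (hy1 s hs)
    have hsin0 : 0 ≤ Real.sin ((y s + 1)⁻¹) :=
      Real.sin_nonneg_of_nonneg_of_le_pi hu0.le (by linarith [Real.pi_gt_three])
    have hsin1 : Real.sin ((y s + 1)⁻¹) ≤ 1 := Real.sin_le_one _
    have hsq : (0 : ℝ) < (y s + 1) ^ 2 := pow_pos (hy1pos s hs) 2
    rcases le_or_gt (y' s) 0 with hle | hlt
    · have : F' s ≤ 0 := mul_nonpos_of_nonneg_of_nonpos hsin0
        (div_nonpos_of_nonpos_of_nonneg hle hsq.le)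
      exact this.trans (hnn s hs)
    · have h1 : F' s ≤ y' s / (y s + 1) ^ 2 := by
        have := mul_le_mul_of_nonneg_right hsin1 (le_of_lt (div_pos hlt hsq))
        simpa [hF'] using this
      refine h1.trans ?_
      rw [div_le_iff₀ hsq]
      have := hineq s hs
      calc y' s ≤ (y s + 1) ^ 2 * (g s + c * y s ^ (α / 2)) := this
        _ = h s * (y s + 1) ^ 2 := by rw [hh]; ring
  -- integral inequality: F t - F 0 ≤ ∫₀ᵗ h
  have hsubset : Set.Icc 0 t ⊆ Set.Icc 0 T := Set.Icc_subset_Icc_right ht.2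
  have key : F t - F 0 ≤ ∫ s in (0:ℝ)..t, h s := by
    apply sub_le_integral_of_hasDeriv_right_of_le ht.1
      (fun s hs => (hFderiv s (hsubset hs)).continuousAt.continuousWithinAt)
      (fun s hs => (hFderiv s (hsubset (Set.Ioo_subset_Icc_self hs))).hasDerivWithinAt)
      (hint.mono_set hsubset)
      (fun s hs => hF'le s (hsubset (Set.Ioo_subset_Icc_self hs)))
  -- ∫₀ᵗ h ≤ ∫₀ᵀ h
  have hii1 : IntervalIntegrable h volume 0 t := by
    rw [intervalIntegrable_iff_integrableOn_Icc_of_le ht.1]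
    exact hint.mono_set hsubset
  have hii2 : IntervalIntegrable h volume t T := by
    rw [intervalIntegrable_iff_integrableOn_Icc_of_le ht.2]
    exact hint.mono_set (Set.Icc_subset_Icc_left ht.1)
  have hmono : (∫ s in (0:ℝ)..t, h s) ≤ ∫ s in (0:ℝ)..T, h s := by
    rw [← intervalIntegral.integral_add_adjacent_intervals hii1 hii2]
    have : (0:ℝ) ≤ ∫ s in t..T, h s :=
      intervalIntegral.integral_nonneg ht.2
        (fun s hs => hnn s ⟨ht.1.trans hs.1, hs.2⟩)
    linarith
  -- ∫₀ᵀ h = ∫₀ᵀ g + c ∫₀ᵀ y^{α/2}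
  have hgi : IntervalIntegrable g volume 0 T := by
    rw [intervalIntegrable_iff_integrableOn_Icc_of_le hT.le]; exact hgint
  have hpi : IntervalIntegrable (fun s => c * y s ^ (α / 2)) volume 0 T := by
    rw [intervalIntegrable_iff_integrableOn_Icc_of_le hT.le]
    exact hpowint.const_mul c
  have hsplit : (∫ s in (0:ℝ)..T, h s)
      = (∫ s in (0:ℝ)..T, g s) + c * ∫ s in (0:ℝ)..T, y s ^ (α / 2) := by
    rw [hh, intervalIntegral.integral_add hgi hpi, intervalIntegral.integral_const_mul]
  -- conclude F t ≤ K
  have hFt : F t ≤ K := by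
    have hF0 : F 0 = Real.cos (1 / (y 0 + 1)) := by rw [hF, one_div]
    rw [hK, ← hF0]
    have := key.trans (hmono.trans_eq hsplit)
    linarith
  -- final arccos argument
  have hu0 : (0 : ℝ) < (y t + 1)⁻¹ := inv_pos.2 (hy1pos t ht)
  have hu1 : (y t + 1)⁻¹ ≤ 1 := inv_le_one_of_one_le₀ (hy1 t ht)
  have harc : Real.arccos K ≤ (y t + 1)⁻¹ := by
    have h1 : Real.arccos K ≤ Real.arccos (F t) := by
      rw [Real.arccos_eq_pi_div_two_sub_arcsin, Real.arccos_eq_pi_div_two_sub_arcsin]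
      linarith [Real.monotone_arcsin hFt]
    have h2 : Real.arccos (F t) = (y t + 1)⁻¹ :=
      Real.arccos_cos hu0.le (by linarith [Real.pi_gt_three])
    linarith
  have hapos : 0 < Real.arccos K := Real.arccos_pos.2 hK1
  have : y t + 1 ≤ 1 / Real.arccos K := by
    rw [le_div_iff₀ hapos]
    calc (y t + 1) * Real.arccos K ≤ (y t + 1) * (y t + 1)⁻¹ :=
          mul_le_mul_of_nonneg_left harc (hy1pos t ht).le
      _ = 1 := mul_inv_cancel₀ (hy1pos t ht).ne'
  linarith
end

section
/- Let T > 0, ν > 0, c > 0 and let α be a real number with 2 ≤ α ≤ 4. Let y : [0,T] → ℝ be differentiable with y(t) ≥ 0 for all t ∈ [0,T], let A : [0,T] → ℝ satisfy A(t) ≥ 0 for all t ∈ [0,T], and let g : [0,T] → ℝ be Lebesgue integrable with g(t) ≥ 0 for all t ∈ [0,T]. Suppose y'(t) + ν·A(t)² ≤ g(t) + c · y(t)^{3/4} · A(t)^{3/2} for all t ∈ [0,T], and set K = cos(1/(y(0)+1)) + ∫₀^{T} g(s) ds + (27c⁴/(32ν³)) · ∫₀^{T} y(s)^{α/2} ds.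 If K < 1, then for every t ∈ [0,T], y(t) ≤ 1/arccos(K) − 1; in particular y is bounded on [0,T]. -/
open intervalIntegral MeasureTheory

/-- ODE form of the paper's Proposition 3: the forced differential inequality
`y' + νA² ≤ g + c y^{3/4} A^{3/2}` together with the smallness condition `K < 1`,
where `K = cos(1/(y(0)+1)) + ∫₀ᵀ g + (27c⁴/(32ν³)) ∫₀ᵀ y^{α/2}`, yields a uniform
bound on `y`. -/
theorem bounded_with_force (T ν c α : ℝ) (hT : 0 < T) (hν : 0 < ν) (hc : 0 < c)
    (hα1 : 2 ≤ α) (hα2 : α ≤ 4) (y y' A g : ℝ → ℝ)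
    (hy : ∀ t ∈ Set.Icc 0 T, HasDerivAt y (y' t) t)
    (hynn : ∀ t ∈ Set.Icc 0 T, 0 ≤ y t)
    (hA : ∀ t ∈ Set.Icc 0 T, 0 ≤ A t)
    (hgint : IntegrableOn g (Set.Icc 0 T))
    (hg : ∀ t ∈ Set.Icc 0 T, 0 ≤ g t)
    (hineq : ∀ t ∈ Set.Icc 0 T,
      y' t + ν * A t ^ 2 ≤ g t + c * y t ^ ((3:ℝ)/4) * A t ^ ((3:ℝ)/2))
    (K : ℝ)
    (hK : K = Real.cos (1 / (y 0 + 1)) + (∫ s in (0:ℝ)..T, g s) +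
      27 * c ^ 4 / (32 * ν ^ 3) * ∫ s in (0:ℝ)..T, y s ^ (α / 2))
    (hK1 : K < 1) :
    ∀ t ∈ Set.Icc 0 T, y t ≤ 1 / Real.arccos K - 1 := by
  have hαpos : (0:ℝ) < α / 2 := by linarith
  set C : ℝ := 27 * c ^ 4 / (32 * ν ^ 3) with hCdef
  have hCpos : 0 < C := by positivity
  set G : ℝ → ℝ := fun t => g t + C * y t ^ (α / 2) with hGdef
  have hycont : ContinuousOn y (Set.Icc 0 T) := fun s hs =>
    ((hy s hs).continuousAt).continuousWithinAt
  have hGnn : ∀ s ∈ Set.Icc 0 T, 0 ≤ G s := fun s hs =>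
    add_nonneg (hg s hs) (mul_nonneg hCpos.le (Real.rpow_nonneg (hynn s hs) _))
  have hrcont : ContinuousOn (fun s => y s ^ (α / 2)) (Set.Icc 0 T) :=
    hycont.rpow_const (fun s hs => Or.inr hαpos.le)
  have hGint : IntegrableOn G (Set.Icc 0 T) :=
    hgint.add ((continuousOn_const.mul hrcont).integrableOn_Icc)
  -- Step 1: pointwise Young inequality consequence
  have key : ∀ s ∈ Set.Icc 0 T, y' s ≤ g s + C * y s ^ 3 := by
    intro s hs
    have ha := hynn s hs
    have hb := hA s hs
    have hyoung : c * y s ^ ((3:ℝ)/4) * A s ^ ((3:ℝ)/2) ≤ ν/2 * A s ^ 2 + C * y s ^ 3 := by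
      set p := y s ^ ((1:ℝ)/4) with hpdef
      set q := A s ^ ((1:ℝ)/2) with hqdef
      have hp : 0 ≤ p := Real.rpow_nonneg ha _
      have hq : 0 ≤ q := Real.rpow_nonneg hb _
      have e1 : y s ^ ((3:ℝ)/4) = p ^ 3 := by
        rw [hpdef, ← Real.rpow_natCast (y s ^ ((1:ℝ)/4)) 3, ← Real.rpow_mul ha]
        norm_num
      have e2 : A s ^ ((3:ℝ)/2) = q ^ 3 := by
        rw [hqdef, ← Real.rpow_natCast (A s ^ ((1:ℝ)/2)) 3, ← Real.rpow_mul hb]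
        norm_num
      have e3 : A s ^ 2 = q ^ 4 := by
        rw [hqdef, ← Real.rpow_natCast (A s ^ ((1:ℝ)/2)) 4, ← Real.rpow_mul hb,
          ← Real.rpow_natCast (A s) 2]
        norm_num
      have e4 : y s ^ 3 = p ^ 12 := by
        rw [hpdef, ← Real.rpow_natCast (y s ^ ((1:ℝ)/4)) 12, ← Real.rpow_mul ha,
          ← Real.rpow_natCast (y s) 3]
        norm_num
      rw [e1, e2, e3, e4]
      have hfact : 0 ≤ (3*(c*p^3) - 2*(ν*q))^2 *
          (3*(c*p^3)^2 + 4*(ν*q)*(c*p^3) + 4*(ν*q)^2) := by positivity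
      have hmain : 32*ν^3*(c*p^3*q^3) ≤ 16*ν^4*q^4 + 27*c^4*p^12 := by nlinarith [hfact]
      have h2 : ν/2*q^4 + C*p^12 - c*p^3*q^3 =
          (16*ν^4*q^4 + 27*c^4*p^12 - 32*ν^3*(c*p^3*q^3))/(32*ν^3) := by
        rw [hCdef]; field_simp; ring
      have h3 : 0 ≤ ν/2*q^4 + C*p^12 - c*p^3*q^3 := by
        rw [h2]; apply div_nonneg (by linarith) (by positivity)
      linarith
    have := hineq s hs
    nlinarith [sq_nonneg (A s)]
  -- Step 2: derivative of w t = cos((y t + 1)⁻¹)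
  set w : ℝ → ℝ := fun t => Real.cos ((y t + 1)⁻¹) with hwdef
  set W : ℝ → ℝ := fun s => Real.sin ((y s + 1)⁻¹) * (y' s / (y s + 1)^2) with hWdef
  have hne : ∀ s ∈ Set.Icc 0 T, y s + 1 ≠ 0 := by
    intro s hs; have := hynn s hs; positivity
  have hw : ∀ s ∈ Set.Icc 0 T, HasDerivAt w (W s) s := by
    intro s hs
    have h1 : HasDerivAt (fun t => y t + 1) (y' s) s := (hy s hs).add_const 1
    have h2 := h1.inv (hne s hs)
    have h3 := h2.cos
    convert h3 using 1
    · rfl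
    rw [hWdef]; simp only [Pi.inv_apply]; ring
  -- Step 3: pointwise bound W ≤ G on [0,T]
  have hWle : ∀ s ∈ Set.Icc 0 T, W s ≤ G s := by
    intro s hs
    have ha := hynn s hs
    have hpos : (0:ℝ) < y s + 1 := by linarith
    have hu0 : (0:ℝ) < (y s + 1)⁻¹ := inv_pos.2 hpos
    have hu1 : (y s + 1)⁻¹ ≤ 1 := by
      rw [inv_le_one_iff₀]; right; linarith
    rcases le_or_gt (y' s) 0 with h | h
    · have hsin : 0 ≤ Real.sin ((y s + 1)⁻¹) :=
        Real.sin_nonneg_of_nonneg_of_le_pi hu0.le (hu1.trans (by linarith [Real.pi_gt_three]))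
      have : W s ≤ 0 := by
        rw [hWdef]
        exact mul_nonpos_of_nonneg_of_nonpos hsin
          (div_nonpos_of_nonpos_of_nonneg h (by positivity))
      exact this.trans (hGnn s hs)
    · -- W s ≤ y' s / (y s + 1)^3 ≤ (g s + C y³)/(y+1)³ ≤ g s + C y^{α/2}
      have hsin : Real.sin ((y s + 1)⁻¹) ≤ (y s + 1)⁻¹ := Real.sin_le hu0.le
      have hW1 : W s ≤ y' s / (y s + 1)^3 := by
        rw [hWdef]
        have hdiv : 0 ≤ y' s / (y s + 1)^2 := div_nonneg h.le (by positivity)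
        calc Real.sin ((y s + 1)⁻¹) * (y' s / (y s + 1)^2)
            ≤ (y s + 1)⁻¹ * (y' s / (y s + 1)^2) := mul_le_mul_of_nonneg_right hsin hdiv
          _ = y' s / (y s + 1)^3 := by
              rw [div_eq_mul_inv, div_eq_mul_inv, ← mul_assoc, mul_comm ((y s + 1)⁻¹) (y' s),
                mul_assoc, ← mul_inv, ← pow_succ']
      have hden1 : (1:ℝ) ≤ (y s + 1)^3 := one_le_pow₀ (by linarith)
      have hdenpos : (0:ℝ) < (y s + 1)^3 := by positivity
      have hW2 : y' s / (y s + 1)^3 ≤ (g s + C * y s ^ 3) / (y s + 1)^3 := by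
        rw [div_eq_mul_inv, div_eq_mul_inv]
        exact mul_le_mul_of_nonneg_right (key s hs) (inv_pos.2 hdenpos).le
      have hcube : y s ^ 3 / (y s + 1)^3 ≤ y s ^ (α / 2) := by
        rcases le_or_gt (y s) 1 with hy1 | hy1
        · have h1 : y s ^ 3 / (y s + 1)^3 ≤ y s ^ 3 :=
            div_le_self (by positivity) hden1
          have h2 : y s ^ 3 ≤ y s ^ 2 := pow_le_pow_of_le_one ha hy1 (by norm_num)
          have h3 : y s ^ (2:ℝ) ≤ y s ^ (α / 2) :=
            Real.rpow_le_rpow_of_exponent_ge' ha hy1 hαpos.le (by linarith)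
          have h4 : y s ^ (2:ℝ) = y s ^ 2 := by
            rw [← Real.rpow_natCast (y s) 2]; norm_num
          rw [h4] at h3
          exact le_trans h1 (le_trans h2 h3)
        · have h1 : y s ^ 3 / (y s + 1)^3 ≤ 1 := by
            rw [div_le_one hdenpos]
            exact pow_le_pow_left₀ ha (by linarith) 3
          have h2 : y s ^ (1:ℝ) ≤ y s ^ (α / 2) :=
            Real.rpow_le_rpow_of_exponent_le hy1.le (by linarith)
          rw [Real.rpow_one] at h2
          exact le_trans h1 (le_trans hy1.le h2)
      have hW3 : (g s + C * y s ^ 3) / (y s + 1)^3 ≤ G s := by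
        rw [add_div]
        have hg1 : g s / (y s + 1)^3 ≤ g s := div_le_self (hg s hs) hden1
        have hg2 : C * y s ^ 3 / (y s + 1)^3 ≤ C * y s ^ (α / 2) := by
          rw [mul_div_assoc]
          exact mul_le_mul_of_nonneg_left hcube hCpos.le
        exact add_le_add hg1 hg2
      exact le_trans hW1 (le_trans hW2 hW3)
  -- Step 4: FTC inequality on [0, t]
  intro t ht
  have hsub : Set.Icc (0:ℝ) t ⊆ Set.Icc 0 T := Set.Icc_subset_Icc le_rfl ht.2
  have hwcont : ContinuousOn w (Set.Icc 0 t) := fun s hs =>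
    ((hw s (hsub hs)).continuousAt).continuousWithinAt
  have hFTC : w t - w 0 ≤ ∫ s in (0:ℝ)..t, G s := by
    apply sub_le_integral_of_hasDeriv_right_of_le ht.1 hwcont
    · intro x hx
      exact (hw x (hsub (Set.mem_Icc.2 ⟨hx.1.le, hx.2.le⟩))).hasDerivWithinAt
    · exact hGint.mono_set hsub
    · intro x hx
      exact hWle x (hsub (Set.mem_Icc.2 ⟨hx.1.le, hx.2.le⟩))
  -- integrability as interval integrals
  have huIcc : Set.uIcc (0:ℝ) T = Set.Icc 0 T := Set.uIcc_of_le hT.le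
  have hG_ii : IntervalIntegrable G volume 0 T := by
    rw [intervalIntegrable_iff_integrableOn_Icc_of_le hT.le]; exact hGint
  have hg_ii : IntervalIntegrable g volume 0 T := by
    rw [intervalIntegrable_iff_integrableOn_Icc_of_le hT.le]; exact hgint
  have hr_ii : IntervalIntegrable (fun s => y s ^ (α / 2)) volume 0 T := by
    rw [intervalIntegrable_iff_integrableOn_Icc_of_le hT.le]
    exact hrcont.integrableOn_Icc
  have hmono : (∫ s in (0:ℝ)..t, G s) ≤ ∫ s in (0:ℝ)..T, G s := by
    apply integral_mono_interval le_rfl ht.1 ht.2 _ hG_ii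
    rw [Filter.EventuallyLE, ae_restrict_iff' measurableSet_Ioc]
    exact Filter.Eventually.of_forall fun x hx =>
      hGnn x (Set.mem_Icc.2 ⟨hx.1.le, hx.2⟩)
  have hsplit : (∫ s in (0:ℝ)..T, G s) =
      (∫ s in (0:ℝ)..T, g s) + C * ∫ s in (0:ℝ)..T, y s ^ (α / 2) := by
    rw [hGdef]
    rw [integral_add hg_ii (hr_ii.const_mul C), intervalIntegral.integral_const_mul]
  have hwK : w t ≤ K := by
    have hw0 : w 0 = Real.cos (1 / (y 0 + 1)) := by rw [one_div]
    rw [hK]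
    linarith [hFTC, hmono, hsplit, hw0]
  -- Step 5: conclude via arccos
  have hpos : (0:ℝ) < y t + 1 := by linarith [hynn t ht]
  have hu0 : (0:ℝ) < (y t + 1)⁻¹ := inv_pos.2 hpos
  have hu1 : (y t + 1)⁻¹ ≤ 1 := by
    rw [inv_le_one_iff₀]; right; linarith [hynn t ht]
  have hKm1 : (-1:ℝ) ≤ K := le_trans (Real.neg_one_le_cos _) hwK
  have hK0 : 0 < Real.arccos K := Real.arccos_pos.2 hK1
  have harc : Real.arccos K ≤ (y t + 1)⁻¹ := by
    by_contra hcon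
    push_neg at hcon
    have hcos : Real.cos (Real.arccos K) < Real.cos ((y t + 1)⁻¹) :=
      Real.cos_lt_cos_of_nonneg_of_le_pi hu0.le (Real.arccos_le_pi K) hcon
    rw [Real.cos_arccos hKm1 hK1.le] at hcos
    have hwt : Real.cos ((y t + 1)⁻¹) ≤ K := hwK
    linarith
  have h1 : (y t + 1) * Real.arccos K ≤ (y t + 1) * (y t + 1)⁻¹ :=
    mul_le_mul_of_nonneg_left harc hpos.le
  rw [mul_inv_cancel₀ (ne_of_gt hpos)] at h1
  have h2 : y t + 1 ≤ 1 / Real.arccos K := by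
    rw [le_div_iff₀ hK0]; linarith
  linarith
end
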